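/- For integers $0\le k\le a$ and $0\le \ell\le b$ and all real (or complex) $x$, the product of binomial coefficients satisfies $\binom{x+a-k}{a}\cdot\binom{x+b-\ell}{b} = \sum_{i} \binom{a-k+\ell}{i-k}\binom{b-\ell+k}{i-\ell}\binom{x+a+b-i}{a+b}$, where the sum ranges over all integers $i$ (only finitely many terms are nonzero). -/

import Mathlib

/-- Polynomial-style binomial coefficient `(x choose n) = x(x-1)⋯(x-n+1)/n!` for real `x`. -/
noncomputable def fallingBinom (x : ℝ) (n : ℕ) : ℝ :=
  (∏ i ∈ Finset.range n, (x - i)) / n.factorial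

/-- Binomial coefficient `(n choose r)` with integer lower index, zero when `r < 0`. -/
noncomputable def chooseZ (n : ℕ) (r : ℤ) : ℝ :=
  if 0 ≤ r then (n.choose r.toNat : ℝ) else 0

/-- For integers `0 ≤ k ≤ a` and `0 ≤ ℓ ≤ b` and all real `x`,
`C(x+a-k, a) * C(x+b-ℓ, b) = ∑_i C(a-k+ℓ, i-k) C(b-ℓ+k, i-ℓ) C(x+a+b-i, a+b)`,
where the sum over all integers `i` has nonzero terms only for `0 ≤ i ≤ a+b`. -/
lemma fB_zero (x : ℝ) : fallingBinom x 0 = 1 := by simp [fallingBinom]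

lemma fB_succ (x : ℝ) (n : ℕ) :
    ((n : ℝ) + 1) * fallingBinom x (n + 1) = fallingBinom x n * (x - n) := by
  have hf : (n.factorial : ℝ) ≠ 0 := by positivity
  simp only [fallingBinom, Finset.prod_range_succ, Nat.factorial_succ]
  push_cast
  field_simp

lemma fB_pascal (x : ℝ) (n : ℕ) :
    fallingBinom (x + 1) (n + 1) = fallingBinom x (n + 1) + fallingBinom x n := by
  have hprod : (∏ i ∈ Finset.range (n+1), (x + 1 - i)) = (x + 1) * ∏ i ∈ Finset.range n, (x - i) := by
    rw [Finset.prod_range_succ']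
    simp only [Nat.cast_zero, sub_zero]
    rw [mul_comm]
    congr 1
    apply Finset.prod_congr rfl
    intro i _
    push_cast
    ring
  have hf : (n.factorial : ℝ) ≠ 0 := by positivity
  simp only [fallingBinom, Finset.prod_range_succ, Nat.factorial_succ, hprod]
  push_cast
  field_simp
  ring

lemma chooseZ_neg (n : ℕ) {r : ℤ} (h : r < 0) : chooseZ n r = 0 := by
  simp [chooseZ, not_le.2 h]

lemma chooseZ_big (n : ℕ) {r : ℤ} (h : (n : ℤ) < r) : chooseZ n r = 0 := by
  unfold chooseZ
  split
  · rw [Nat.choose_eq_zero_of_lt (by omega)]; simp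
  · rfl

lemma chooseZ_pascal (n : ℕ) (r : ℤ) :
    chooseZ (n + 1) r = chooseZ n r + chooseZ n (r - 1) := by
  by_cases h1 : 0 ≤ r
  · by_cases h2 : 0 ≤ r - 1
    · have ht : r.toNat = (r - 1).toNat + 1 := by omega
      simp only [chooseZ, if_pos h1, if_pos h2, ht, Nat.choose_succ_succ]
      push_cast
      ring
    · have : r = 0 := by omega
      subst this
      simp [chooseZ]
  · simp [chooseZ, h1, show ¬ (0:ℤ) ≤ r - 1 by omega]
    intro h
    exact absurd (by omega) h1

lemma chooseZ_absorb (n : ℕ) (r : ℤ) :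
    (r : ℝ) * chooseZ n r = ((n : ℝ) - (r : ℝ) + 1) * chooseZ n (r - 1) := by
  by_cases h1 : 0 ≤ r - 1
  · have ht : r.toNat = (r - 1).toNat + 1 := by omega
    set m := (r - 1).toNat with hm
    have hr : (r : ℝ) = (m : ℝ) + 1 := by
      have : r = (m : ℤ) + 1 := by omega
      rw [this]; push_cast; ring
    simp only [chooseZ, if_pos h1, if_pos (by omega : (0:ℤ) ≤ r), ht, ← hm]
    by_cases hmn : m ≤ n
    · have habs := Nat.choose_succ_right_eq n m
      have : ((n.choose (m+1) * (m+1) : ℕ) : ℝ) = ((n.choose m * (n - m) : ℕ) : ℝ) := by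
        rw [habs]
      push_cast [hmn] at this
      rw [hr]
      nlinarith [this]
    · have h1' : n.choose (m+1) = 0 := Nat.choose_eq_zero_of_lt (by omega)
      have h2' : n.choose m = 0 := Nat.choose_eq_zero_of_lt (by omega)
      by_cases hmn' : m = n
      · omega
      · simp [h1', h2']
  · by_cases h0 : r = 0
    · subst h0
      simp [chooseZ]
    · have hneg : r < 0 := by omega
      rw [chooseZ_neg n hneg, chooseZ_neg n (by omega : r - 1 < 0)]
      ring

lemma coef_split (u v : ℕ) (r s : ℤ) :
    chooseZ (u + 1) r * chooseZ v s =
      chooseZ u (r - 1) * chooseZ (v + 1) s + chooseZ u r * chooseZ v s -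
        chooseZ u (r - 1) * chooseZ v (s - 1) := by
  have h1 := chooseZ_pascal u r
  have h2 := chooseZ_pascal v s
  linear_combination chooseZ v s * h1 - chooseZ u (r - 1) * h2

lemma coef_split' (u v : ℕ) (r s : ℤ) :
    chooseZ u r * chooseZ (v + 1) s =
      chooseZ (u + 1) r * chooseZ v (s - 1) + chooseZ u r * chooseZ v s -
        chooseZ u (r - 1) * chooseZ v (s - 1) := by
  have h1 := chooseZ_pascal u r
  have h2 := chooseZ_pascal v s
  linear_combination chooseZ u r * h2 - chooseZ v (s-1) * h1

/-- identity (N) -/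
lemma coefN (a b : ℕ) (i : ℤ) :
    chooseZ b (i - 1 - a) * chooseZ a (i - 1 - b) * (2*(a:ℝ) + b + 2 - i) +
      chooseZ b (i - a) * chooseZ a (i - b) * ((i:ℝ) - a) =
    ((a:ℝ) + 1) * (chooseZ b (i - (a:ℤ) - 1) * chooseZ (a + 1) (i - b)) := by
  have hpas := chooseZ_pascal a (i - b)
  have habs1 := chooseZ_absorb b (i - a)
  have habs2 := chooseZ_absorb a (i - b)
  have e1 : i - 1 - (a:ℤ) = i - a - 1 := by ring
  have e2 : i - 1 - (b:ℤ) = i - b - 1 := by ring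
  rw [e1, e2]
  push_cast at habs1 habs2 ⊢
  linear_combination chooseZ a (i - b) * habs1 - chooseZ b (i - (a:ℤ) - 1) * habs2 -
    ((a:ℝ) + 1) * chooseZ b (i - (a:ℤ) - 1) * hpas

lemma diamond (a b : ℕ) (x : ℝ) :
    fallingBinom x a * fallingBinom x b =
      ∑ i ∈ Finset.range (a + b + 1),
        chooseZ b ((i : ℤ) - a) * chooseZ a ((i : ℤ) - b) *
          fallingBinom (x + a + b - i) (a + b) := by
  induction a generalizing x with
  | zero =>
    rw [Finset.sum_eq_single b]
    · simp [chooseZ, fB_zero]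
    · intro i hi hne
      have hib : (i : ℤ) - b < 0 := by
        simp only [Finset.mem_range] at hi; omega
      rw [chooseZ_neg 0 hib]; ring
    · intro h
      exact absurd (by simp only [Finset.mem_range]; omega) h
  | succ a ih =>
    have hD : a + 1 + b = a + b + 1 := by omega
    rw [hD]
    have ha : ((a : ℝ) + 1) ≠ 0 := by positivity
    apply mul_left_cancel₀ ha
    have h1 : ((a:ℝ) + 1) * (fallingBinom x (a+1) * fallingBinom x b) =
        (x - a) * (fallingBinom x a * fallingBinom x b) := by
      rw [← mul_assoc, fB_succ]; ring
    rw [h1, ih x, Finset.mul_sum, Finset.mul_sum]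
    have hterm : ∀ i ∈ Finset.range (a + b + 1),
        (x - (a:ℝ)) * (chooseZ b ((i:ℤ) - a) * chooseZ a ((i:ℤ) - b) *
            fallingBinom (x + a + b - i) (a + b)) =
          chooseZ b ((i:ℤ) - a) * chooseZ a ((i:ℤ) - b) *
              ((2*(a:ℝ) + b + 1 - i) * fallingBinom (x + a + b - i) (a + b + 1)) +
            chooseZ b ((i:ℤ) - a) * chooseZ a ((i:ℤ) - b) *
              (((i:ℝ) - a) * fallingBinom (x + a + b - i + 1) (a + b + 1)) := by
      intro i _
      have hs := fB_succ (x + a + b - i) (a + b)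
      have hp := fB_pascal (x + a + b - i) (a + b)
      push_cast at hs hp
      set c := chooseZ b ((i:ℤ) - a) * chooseZ a ((i:ℤ) - b)
      linear_combination (-c) * hs - c * ((i:ℝ) - a) * hp
    rw [Finset.sum_congr rfl hterm, Finset.sum_add_distrib]
    have hsum2 : ∑ i ∈ Finset.range (a + b + 1),
        chooseZ b ((i:ℤ) - a) * chooseZ a ((i:ℤ) - b) *
          (((i:ℝ) - a) * fallingBinom (x + a + b - i + 1) (a + b + 1)) =
        ∑ i ∈ Finset.range (a + b + 2),
        chooseZ b ((i:ℤ) - a) * chooseZ a ((i:ℤ) - b) *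
          (((i:ℝ) - a) * fallingBinom (x + a + b + 1 - i) (a + b + 1)) := by
      have hz : chooseZ b (((a+b+1 : ℕ) : ℤ) - a) = 0 := by
        apply chooseZ_big; push_cast; omega
      symm
      rw [Finset.sum_range_succ, hz]
      simp only [zero_mul, add_zero]
      apply Finset.sum_congr rfl
      intro i _
      have e : x + (a:ℝ) + b + 1 - i = x + a + b - i + 1 := by ring
      rw [e]
    have hsum1 : ∑ i ∈ Finset.range (a + b + 1),
        chooseZ b ((i:ℤ) - a) * chooseZ a ((i:ℤ) - b) *
          ((2*(a:ℝ) + b + 1 - i) * fallingBinom (x + a + b - i) (a + b + 1)) =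
        ∑ i ∈ Finset.range (a + b + 2),
        chooseZ b ((i:ℤ) - 1 - a) * chooseZ a ((i:ℤ) - 1 - b) *
          ((2*(a:ℝ) + b + 2 - i) * fallingBinom (x + a + b + 1 - i) (a + b + 1)) := by
      have hz : chooseZ b (((0:ℕ):ℤ) - 1 - a) = 0 := by
        apply chooseZ_neg; push_cast; omega
      symm
      rw [Finset.sum_range_succ', hz]
      simp only [zero_mul, add_zero]
      apply Finset.sum_congr rfl
      intro i _
      have e1 : ((i+1 : ℕ) : ℤ) - 1 - (a:ℤ) = (i:ℤ) - a := by push_cast; ring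
      have e2 : ((i+1 : ℕ) : ℤ) - 1 - (b:ℤ) = (i:ℤ) - b := by push_cast; ring
      have e3 : x + (a:ℝ) + b + 1 - ((i+1:ℕ):ℝ) = x + a + b - i := by push_cast; ring
      have e4 : 2*(a:ℝ) + b + 2 - ((i+1:ℕ):ℝ) = 2*(a:ℝ) + b + 1 - i := by push_cast; ring
      rw [e1, e2, e3, e4]
    rw [hsum1, hsum2, ← Finset.sum_add_distrib]
    apply Finset.sum_congr rfl
    intro i _
    have hN := coefN a b (i : ℤ)
    push_cast at hN
    have e5 : (i:ℤ) - ((a+1 : ℕ) : ℤ) = (i:ℤ) - (a:ℤ) - 1 := by push_cast; ring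
    have e6 : x + ((a+1 : ℕ) : ℝ) + b - i = x + a + b + 1 - i := by push_cast; ring
    rw [e5, e6]
    linear_combination fallingBinom (x + a + b + 1 - i) (a + b + 1) * hN

lemma aux : ∀ (n a b k l : ℕ), 2*a + 2*b ≤ n + k + l → k ≤ a → l ≤ b → ∀ x : ℝ,
    fallingBinom (x + a - k) a * fallingBinom (x + b - l) b =
      ∑ i ∈ Finset.range (a + b + 1),
        chooseZ (a - k + l) ((i : ℤ) - k) * chooseZ (b - l + k) ((i : ℤ) - l) *
          fallingBinom (x + a + b - i) (a + b) := by
  intro n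
  induction n with
  | zero =>
    intro a b k l hm hk hl x
    have hka : k = a := by omega
    have hlb : l = b := by omega
    subst hka; subst hlb
    have e1 : x + (k:ℝ) - k = x := by ring
    have e2 : x + (l:ℝ) - l = x := by ring
    have n1 : k - k + l = l := by omega
    have n2 : l - l + k = k := by omega
    rw [e1, e2, n1, n2]
    exact diamond k l x
  | succ n ihn =>
    intro a b k l hm hk hl x
    by_cases hka : k < a
    · -- case A : decrease a
      obtain ⟨a', rfl⟩ : ∃ a', a = a' + 1 := ⟨a - 1, by omega⟩
      have hk' : k ≤ a' := by omega
      have hDD : a' + 1 + b = a' + b + 1 := by omega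
      have n1 : a' + 1 - k + l = (a' - k + l) + 1 := by omega
      have n2 : a' + 1 - (k+1) + l = a' - k + l := by omega
      have n3 : b - l + (k+1) = (b - l + k) + 1 := by omega
      rw [hDD, n1]
      have IH1 := ihn (a'+1) b (k+1) l (by omega) (by omega) hl x
      rw [hDD, n2, n3] at IH1
      have IH2 := ihn a' b k l (by omega) hk' hl x
      have eL : x + ((a'+1:ℕ):ℝ) - k = (x + (a':ℝ) - k) + 1 := by push_cast; ring
      have eL1 : x + ((a'+1:ℕ):ℝ) - ((k+1:ℕ):ℝ) = x + (a':ℝ) - k := by push_cast; ring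
      rw [eL1] at IH1
      rw [eL, fB_pascal (x + (a':ℝ) - k) a', add_mul, IH1, IH2]
      -- notation:
      -- F i = fallingBinom (x + ↑(a'+1) + ↑b - ↑i) (a'+b+1)
      have hsplit : ∀ i ∈ Finset.range (a' + b + 1 + 1),
          chooseZ ((a' - k + l) + 1) ((i:ℤ) - k) * chooseZ (b - l + k) ((i:ℤ) - l) *
              fallingBinom (x + ((a'+1:ℕ):ℝ) + b - i) (a'+b+1) =
            chooseZ (a' - k + l) ((i:ℤ) - k - 1) * chooseZ ((b - l + k) + 1) ((i:ℤ) - l) *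
                fallingBinom (x + ((a'+1:ℕ):ℝ) + b - i) (a'+b+1) +
              (chooseZ (a' - k + l) ((i:ℤ) - k) * chooseZ (b - l + k) ((i:ℤ) - l) *
                fallingBinom (x + ((a'+1:ℕ):ℝ) + b - i) (a'+b+1) -
              chooseZ (a' - k + l) ((i:ℤ) - k - 1) * chooseZ (b - l + k) ((i:ℤ) - l - 1) *
                fallingBinom (x + ((a'+1:ℕ):ℝ) + b - i) (a'+b+1)) := by
        intro i _
        have hc := coef_split (a' - k + l) (b - l + k) ((i:ℤ) - k) ((i:ℤ) - l)
        linear_combination fallingBinom (x + ((a'+1:ℕ):ℝ) + b - i) (a'+b+1) * hc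
      rw [Finset.sum_congr rfl hsplit, Finset.sum_add_distrib, Finset.sum_sub_distrib]
      congr 1
      · -- first sums match IH1's RHS
        apply Finset.sum_congr rfl
        intro i _
        rw [show (i:ℤ) - ((k+1:ℕ):ℤ) = (i:ℤ) - k - 1 by push_cast; ring]
      · -- second part equals IH2's RHS
        have hT2 : ∑ i ∈ Finset.range (a' + b + 1 + 1),
            chooseZ (a' - k + l) ((i:ℤ) - k) * chooseZ (b - l + k) ((i:ℤ) - l) *
              fallingBinom (x + ((a'+1:ℕ):ℝ) + b - i) (a'+b+1) =
            ∑ i ∈ Finset.range (a' + b + 1),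
            chooseZ (a' - k + l) ((i:ℤ) - k) * chooseZ (b - l + k) ((i:ℤ) - l) *
              fallingBinom (x + ((a'+1:ℕ):ℝ) + b - i) (a'+b+1) := by
          rw [Finset.sum_range_succ,
            show chooseZ (b - l + k) (((a'+b+1:ℕ):ℤ) - l) = 0 from chooseZ_big _ (by omega)]
          simp
        have hT3 : ∑ i ∈ Finset.range (a' + b + 1 + 1),
            chooseZ (a' - k + l) ((i:ℤ) - k - 1) * chooseZ (b - l + k) ((i:ℤ) - l - 1) *
              fallingBinom (x + ((a'+1:ℕ):ℝ) + b - i) (a'+b+1) =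
            ∑ i ∈ Finset.range (a' + b + 1),
            chooseZ (a' - k + l) ((i:ℤ) - k) * chooseZ (b - l + k) ((i:ℤ) - l) *
              fallingBinom (x + (a':ℝ) + b - i) (a'+b+1) := by
          rw [Finset.sum_range_succ',
            show chooseZ (a' - k + l) (((0:ℕ):ℤ) - k - 1) = 0 from chooseZ_neg _ (by omega)]
          simp only [zero_mul, mul_zero, add_zero]
          apply Finset.sum_congr rfl
          intro i _
          have ei2 : x + ((a'+1:ℕ):ℝ) + b - ((i+1:ℕ):ℝ) = x + (a':ℝ) + b - i := by push_cast; ring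
          have ei3 : ((i+1:ℕ):ℤ) - (k:ℤ) - 1 = (i:ℤ) - k := by push_cast; ring
          have ei4 : ((i+1:ℕ):ℤ) - (l:ℤ) - 1 = (i:ℤ) - l := by push_cast; ring
          rw [ei2, ei3, ei4]
        rw [hT2, hT3, ← Finset.sum_sub_distrib]
        apply Finset.sum_congr rfl
        intro i _
        have hp := fB_pascal (x + (a':ℝ) + b - i) (a' + b)
        have ei1 : x + ((a'+1:ℕ):ℝ) + b - i = (x + (a':ℝ) + b - i) + 1 := by push_cast; ring
        rw [ei1]
        linear_combination (-(chooseZ (a' - k + l) ((i:ℤ) - k) * chooseZ (b - l + k) ((i:ℤ) - l))) * hp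
    · -- k = a
      have hka' : k = a := by omega
      subst hka'
      by_cases hlb : l < b
      swap
      · -- terminal : k = a, l = b
        have hlb' : l = b := by omega
        subst hlb'
        have e1 : x + (k:ℝ) - k = x := by ring
        have e2 : x + (l:ℝ) - l = x := by ring
        have m1 : k - k + l = l := by omega
        have m2 : l - l + k = k := by omega
        rw [e1, e2, m1, m2]
        exact diamond k l x
      obtain ⟨b', rfl⟩ : ∃ b', b = b' + 1 := ⟨b - 1, by omega⟩
      have hl' : l ≤ b' := by omega
      have hDD : k + (b' + 1) = k + b' + 1 := by omega
      have n0 : k - k + l = l := by omega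
      have n1 : b' + 1 - l + k = (b' - l + k) + 1 := by omega
      rw [hDD, n0, n1]
      have IH1 := ihn k (b'+1) k (l+1) (by omega) le_rfl (by omega) x
      have n2 : k - k + (l+1) = l + 1 := by omega
      have n3 : b' + 1 - (l+1) + k = b' - l + k := by omega
      rw [hDD, n2, n3] at IH1
      have IH2 := ihn k b' k l (by omega) le_rfl hl' x
      rw [n0] at IH2
      have eL : x + ((b'+1:ℕ):ℝ) - l = (x + (b':ℝ) - l) + 1 := by push_cast; ring
      have eL1 : x + ((b'+1:ℕ):ℝ) - ((l+1:ℕ):ℝ) = x + (b':ℝ) - l := by push_cast; ring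
      rw [eL1] at IH1
      rw [eL, fB_pascal (x + (b':ℝ) - l) b', mul_add, IH1, IH2]
      have hsplit : ∀ i ∈ Finset.range (k + b' + 1 + 1),
          chooseZ l ((i:ℤ) - k) * chooseZ ((b' - l + k) + 1) ((i:ℤ) - l) *
              fallingBinom (x + (k:ℝ) + ((b'+1:ℕ):ℝ) - i) (k+b'+1) =
            chooseZ (l + 1) ((i:ℤ) - k) * chooseZ (b' - l + k) ((i:ℤ) - l - 1) *
                fallingBinom (x + (k:ℝ) + ((b'+1:ℕ):ℝ) - i) (k+b'+1) +
              (chooseZ l ((i:ℤ) - k) * chooseZ (b' - l + k) ((i:ℤ) - l) *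
                fallingBinom (x + (k:ℝ) + ((b'+1:ℕ):ℝ) - i) (k+b'+1) -
              chooseZ l ((i:ℤ) - k - 1) * chooseZ (b' - l + k) ((i:ℤ) - l - 1) *
                fallingBinom (x + (k:ℝ) + ((b'+1:ℕ):ℝ) - i) (k+b'+1)) := by
        intro i _
        have hc := coef_split' l (b' - l + k) ((i:ℤ) - k) ((i:ℤ) - l)
        linear_combination fallingBinom (x + (k:ℝ) + ((b'+1:ℕ):ℝ) - i) (k+b'+1) * hc
      rw [Finset.sum_congr rfl hsplit, Finset.sum_add_distrib, Finset.sum_sub_distrib]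
      congr 1
      · apply Finset.sum_congr rfl
        intro i _
        rw [show (i:ℤ) - ((l+1:ℕ):ℤ) = (i:ℤ) - l - 1 by push_cast; ring]
      · have hT2 : ∑ i ∈ Finset.range (k + b' + 1 + 1),
            chooseZ l ((i:ℤ) - k) * chooseZ (b' - l + k) ((i:ℤ) - l) *
              fallingBinom (x + (k:ℝ) + ((b'+1:ℕ):ℝ) - i) (k+b'+1) =
            ∑ i ∈ Finset.range (k + b' + 1),
            chooseZ l ((i:ℤ) - k) * chooseZ (b' - l + k) ((i:ℤ) - l) *
              fallingBinom (x + (k:ℝ) + ((b'+1:ℕ):ℝ) - i) (k+b'+1) := by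
          rw [Finset.sum_range_succ,
            show chooseZ (b' - l + k) (((k+b'+1:ℕ):ℤ) - l) = 0 from chooseZ_big _ (by omega)]
          simp
        have hT3 : ∑ i ∈ Finset.range (k + b' + 1 + 1),
            chooseZ l ((i:ℤ) - k - 1) * chooseZ (b' - l + k) ((i:ℤ) - l - 1) *
              fallingBinom (x + (k:ℝ) + ((b'+1:ℕ):ℝ) - i) (k+b'+1) =
            ∑ i ∈ Finset.range (k + b' + 1),
            chooseZ l ((i:ℤ) - k) * chooseZ (b' - l + k) ((i:ℤ) - l) *
              fallingBinom (x + (k:ℝ) + (b':ℝ) - i) (k+b'+1) := by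
          rw [Finset.sum_range_succ',
            show chooseZ l (((0:ℕ):ℤ) - k - 1) = 0 from chooseZ_neg _ (by omega)]
          simp only [zero_mul, mul_zero, add_zero]
          apply Finset.sum_congr rfl
          intro i _
          have ei2 : x + (k:ℝ) + ((b'+1:ℕ):ℝ) - ((i+1:ℕ):ℝ) = x + (k:ℝ) + (b':ℝ) - i := by push_cast; ring
          have ei3 : ((i+1:ℕ):ℤ) - (k:ℤ) - 1 = (i:ℤ) - k := by push_cast; ring
          have ei4 : ((i+1:ℕ):ℤ) - (l:ℤ) - 1 = (i:ℤ) - l := by push_cast; ring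
          rw [ei2, ei3, ei4]
        rw [hT2, hT3, ← Finset.sum_sub_distrib]
        apply Finset.sum_congr rfl
        intro i _
        have hp := fB_pascal (x + (k:ℝ) + b' - i) (k + b')
        have ei1 : x + (k:ℝ) + ((b'+1:ℕ):ℝ) - i = (x + (k:ℝ) + b' - i) + 1 := by push_cast; ring
        rw [ei1]
        linear_combination (-(chooseZ l ((i:ℤ) - k) * chooseZ (b' - l + k) ((i:ℤ) - l))) * hp

theorem binom_product_identity (a b k l : ℕ) (hk : k ≤ a) (hl : l ≤ b) (x : ℝ) :
    fallingBinom (x + a - k) a * fallingBinom (x + b - l) b =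
      ∑ i ∈ Finset.range (a + b + 1),
        chooseZ (a - k + l) ((i : ℤ) - k) * chooseZ (b - l + k) ((i : ℤ) - l) *
          fallingBinom (x + a + b - i) (a + b) := by
  exact aux (2*a + 2*b) a b k l (by omega) hk hl x
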